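/- Let f : 𝕋^d → ℝ be a trigonometric polynomial of the form f(x) = Σ_{λ ∈ Λ} c_λ e^{2πi⟨λ,x⟩} with Λ ⊆ {λ ∈ ℤ^d : |λ|² = E} and real-valued f. Then for every ε > 0, (1/(2ε)) · ∫_{𝕋^d} 1_{|f(x)| ≤ ε} |∇f(x)| dx ≤ 6d√E. -/

import Mathlib

open Real MeasureTheory Finset

lemma tv_base (g g' : ℝ → ℝ) (hderiv : ∀ t, HasDerivAt g (g' t) t)
    (hcont : Continuous g') (ε : ℝ) (hε : 0 < ε) (a b : ℝ)
    (hpos : ∀ t ∈ Set.Ioo a b, 0 ≤ g' t) :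
    ∫ t in Set.Icc a b, Set.indicator {t | |g t| ≤ ε} (fun t => |g' t|) t ≤ 2 * ε := by
  have hgd : Differentiable ℝ g := fun t => (hderiv t).differentiableAt
  have hgc : Continuous g := hgd.continuous
  have hT : IsClosed {t : ℝ | |g t| ≤ ε} := isClosed_le (hgc.abs) continuous_const
  rw [MeasureTheory.setIntegral_indicator hT.measurableSet]
  set K := Set.Icc a b ∩ {t : ℝ | |g t| ≤ ε} with hKdef
  have hmono : MonotoneOn g (Set.Icc a b) := by
    apply monotoneOn_of_deriv_nonneg (convex_Icc a b) hgc.continuousOn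
      (hgd.differentiableOn)
    intro x hx
    rw [interior_Icc] at hx
    rw [(hderiv x).deriv]
    exact hpos x hx
  rcases K.eq_empty_or_nonempty with hKe | hKne
  · rw [hKe]
    simp
    positivity
  have hKcomp : IsCompact K := IsCompact.inter_right isCompact_Icc hT
  set a' := sInf K with ha'
  set b' := sSup K with hb'
  have ha'K : a' ∈ K := hKcomp.sInf_mem hKne
  have hb'K : b' ∈ K := hKcomp.sSup_mem hKne
  have ha'b' : a' ≤ b' := csInf_le_csSup hKne hKcomp.bddBelow hKcomp.bddAbove
  have hKI : K = Set.Icc a' b' := by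
    ext z
    constructor
    · intro hz
      exact ⟨csInf_le hKcomp.bddBelow hz, le_csSup hKcomp.bddAbove hz⟩
    · rintro ⟨hz1, hz2⟩
      have hzab : z ∈ Set.Icc a b := ⟨ha'K.1.1.trans hz1, hz2.trans hb'K.1.2⟩
      refine ⟨hzab, ?_⟩
      have h1 : g a' ≤ g z := hmono ha'K.1 hzab hz1
      have h2 : g z ≤ g b' := hmono hzab hb'K.1 hz2
      have := abs_le.1 (Set.mem_setOf_eq ▸ ha'K.2)
      have := abs_le.1 (Set.mem_setOf_eq ▸ hb'K.2)
      simp only [Set.mem_setOf_eq, abs_le]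
      constructor <;> linarith
  rw [hKI]
  rw [MeasureTheory.integral_Icc_eq_integral_Ioc, MeasureTheory.integral_Ioc_eq_integral_Ioo]
  have hsub : Set.Ioo a' b' ⊆ Set.Ioo a b := Set.Ioo_subset_Ioo ha'K.1.1 hb'K.1.2
  have hcong : ∫ t in Set.Ioo a' b', |g' t| = ∫ t in Set.Ioo a' b', g' t := by
    apply MeasureTheory.setIntegral_congr_fun measurableSet_Ioo
    intro t ht
    exact abs_of_nonneg (hpos t (hsub ht))
  rw [hcong, ← MeasureTheory.integral_Ioc_eq_integral_Ioo,
    ← intervalIntegral.integral_of_le ha'b']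
  rw [intervalIntegral.integral_eq_sub_of_hasDerivAt (fun x _ => hderiv x)
    (hcont.intervalIntegrable a' b')]
  have := abs_le.1 (Set.mem_setOf_eq ▸ ha'K.2)
  have := abs_le.1 (Set.mem_setOf_eq ▸ hb'K.2)
  linarith

lemma tv_base' (g g' : ℝ → ℝ) (hderiv : ∀ t, HasDerivAt g (g' t) t)
    (hcont : Continuous g') (ε : ℝ) (hε : 0 < ε) (a b : ℝ)
    (hnz : ∀ t ∈ Set.Ioo a b, g' t ≠ 0) :
    ∫ t in Set.Icc a b, Set.indicator {t | |g t| ≤ ε} (fun t => |g' t|) t ≤ 2 * ε := by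
  have hsign : (∀ t ∈ Set.Ioo a b, 0 ≤ g' t) ∨ (∀ t ∈ Set.Ioo a b, g' t ≤ 0) := by
    by_contra h
    push_neg at h
    obtain ⟨⟨u, hu, hu0⟩, ⟨v, hv, hv0⟩⟩ := h
    have h0 : (0:ℝ) ∈ Set.uIcc (g' u) (g' v) := by
      rw [Set.mem_uIcc]
      left; exact ⟨hu0.le, hv0.le⟩
    obtain ⟨t, ht, ht0⟩ := intermediate_value_uIcc (hcont.continuousOn (s := Set.uIcc u v)) h0
    have : t ∈ Set.Ioo a b := by
      rcases Set.mem_uIcc.1 ht with h' | h'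
      · exact ⟨lt_of_lt_of_le hu.1 h'.1, lt_of_le_of_lt h'.2 hv.2⟩
      · exact ⟨lt_of_lt_of_le hv.1 h'.1, lt_of_le_of_lt h'.2 hu.2⟩
    exact hnz t this ht0
  rcases hsign with hs | hs
  · exact tv_base g g' hderiv hcont ε hε a b hs
  · have heq : ∀ t, Set.indicator {t : ℝ | |g t| ≤ ε} (fun t => |g' t|) t
        = Set.indicator {t : ℝ | |(-g) t| ≤ ε} (fun t => |(-g') t|) t := by
      intro t
      simp [abs_neg]
    simp only [heq]
    exact tv_base (-g) (-g') (fun t => (hderiv t).neg) hcont.neg ε hε a b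
      (fun t ht => by simpa using hs t ht)

lemma tv_pieces (g g' : ℝ → ℝ) (hderiv : ∀ t, HasDerivAt g (g' t) t)
    (hcont : Continuous g') (ε : ℝ) (hε : 0 < ε) :
    ∀ m : ℕ, ∀ a b : ℝ, a ≤ b → ({t | g' t = 0} ∩ Set.Ioo a b).Finite →
    ({t | g' t = 0} ∩ Set.Ioo a b).ncard ≤ m →
    ∫ t in Set.Icc a b, Set.indicator {t | |g t| ≤ ε} (fun t => |g' t|) t
      ≤ 2 * ε * (m + 1) := by
  have hgc : Continuous g := (Differentiable.continuous (fun t => (hderiv t).differentiableAt))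
  have hT : MeasurableSet {t : ℝ | |g t| ≤ ε} :=
    (isClosed_le hgc.abs continuous_const).measurableSet
  have hint : ∀ a b : ℝ, IntegrableOn
      (Set.indicator {t : ℝ | |g t| ≤ ε} (fun t => |g' t|)) (Set.Icc a b) := by
    intro a b
    exact (hcont.abs.integrableOn_Icc).indicator hT
  intro m
  induction m using Nat.strong_induction_on with
  | _ m IH =>
    intro a b hab hfin hcard
    by_cases hz : ({t | g' t = 0} ∩ Set.Ioo a b).Nonempty
    · obtain ⟨t₀, ht₀⟩ := hz
      have hm1 : 1 ≤ m := by
        have : 0 < ({t | g' t = 0} ∩ Set.Ioo a b).ncard :=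
          (Set.ncard_pos hfin).2 ⟨t₀, ht₀⟩
        omega
      set A := {t | g' t = 0} ∩ Set.Ioo a t₀ with hA
      set B := {t | g' t = 0} ∩ Set.Ioo t₀ b with hB
      have hAs : A ⊆ ({t | g' t = 0} ∩ Set.Ioo a b) \ {t₀} := by
        rintro x ⟨hx1, hx2⟩
        exact ⟨⟨hx1, hx2.1, hx2.2.trans ht₀.2.2⟩, by intro h; rw [Set.mem_singleton_iff] at h; exact absurd (h ▸ hx2.2) (lt_irrefl _)⟩
      have hBs : B ⊆ ({t | g' t = 0} ∩ Set.Ioo a b) \ {t₀} := by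
        rintro x ⟨hx1, hx2⟩
        exact ⟨⟨hx1, ht₀.2.1.trans hx2.1, hx2.2⟩, by intro h; rw [Set.mem_singleton_iff] at h; exact absurd (h ▸ hx2.1) (lt_irrefl _)⟩
      have hABdisj : Disjoint A B := by
        rw [Set.disjoint_left]
        rintro x ⟨_, hx2⟩ ⟨_, hy2⟩
        exact absurd (hx2.2.trans hy2.1) (lt_irrefl _)
      have hfinD : (({t | g' t = 0} ∩ Set.Ioo a b) \ {t₀}).Finite := hfin.diff
      have hcardD : (({t | g' t = 0} ∩ Set.Ioo a b) \ {t₀}).ncard ≤ m - 1 := by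
        have := Set.ncard_diff_singleton_le ({t | g' t = 0} ∩ Set.Ioo a b) t₀
        have h2 : (({t | g' t = 0} ∩ Set.Ioo a b) \ {t₀}).ncard
            = ({t | g' t = 0} ∩ Set.Ioo a b).ncard - 1 :=
          Set.ncard_diff_singleton_of_mem ht₀
        omega
      have hcAB : A.ncard + B.ncard ≤ m - 1 := by
        rw [← Set.ncard_union_eq hABdisj (hfinD.subset hAs) (hfinD.subset hBs)]
        exact le_trans (Set.ncard_le_ncard (Set.union_subset hAs hBs) hfinD) hcardD
      have hIA := IH A.ncard (by omega) a t₀ ht₀.2.1.le (hfinD.subset hAs) le_rfl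
      have hIB := IH B.ncard (by omega) t₀ b ht₀.2.2.le (hfinD.subset hBs) le_rfl
      have hsplit : ∫ t in Set.Icc a b, Set.indicator {t | |g t| ≤ ε} (fun t => |g' t|) t
          = (∫ t in Set.Icc a t₀, Set.indicator {t | |g t| ≤ ε} (fun t => |g' t|) t)
          + ∫ t in Set.Icc t₀ b, Set.indicator {t | |g t| ≤ ε} (fun t => |g' t|) t := by
        simp only [MeasureTheory.integral_Icc_eq_integral_Ioc]
        rw [← Set.Ioc_union_Ioc_eq_Ioc ht₀.2.1.le ht₀.2.2.le]
        apply MeasureTheory.setIntegral_union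
        · exact Set.Ioc_disjoint_Ioc_of_le le_rfl
        · exact measurableSet_Ioc
        · exact (hint a t₀).mono_set Set.Ioc_subset_Icc_self
        · exact (hint t₀ b).mono_set Set.Ioc_subset_Icc_self
      rw [hsplit]
      have harith : 2*ε*((A.ncard:ℝ)+1) + 2*ε*((B.ncard:ℝ)+1) ≤ 2*ε*((m:ℝ)+1) := by
        have hc' : (A.ncard : ℝ) + B.ncard + 1 ≤ m := by
          have : A.ncard + B.ncard + 1 ≤ m := by omega
          exact_mod_cast this
        nlinarith [hε.le]
      calc _ ≤ 2*ε*((A.ncard:ℝ)+1) + 2*ε*((B.ncard:ℝ)+1) := add_le_add hIA hIB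
        _ ≤ _ := harith
    · have hnz : ∀ t ∈ Set.Ioo a b, g' t ≠ 0 := by
        intro t ht h0
        exact hz ⟨t, h0, ht⟩
      calc ∫ t in Set.Icc a b, Set.indicator {t | |g t| ≤ ε} (fun t => |g' t|) t
          ≤ 2 * ε := tv_base' g g' hderiv hcont ε hε a b hnz
        _ ≤ 2 * ε * (m+1) := by nlinarith [hε.le]

lemma oneD {ι : Type*} (K : Finset ι) (k : ι → ℤ) (N : ℕ) (hN : 1 ≤ N)
    (hk : ∀ j ∈ K, (k j).natAbs ≤ N) (b : ι → ℂ) (g : ℝ → ℝ)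
    (hg : ∀ t : ℝ, (g t : ℂ) = ∑ j ∈ K, b j * Complex.exp (2 * π * Complex.I * (k j * t)))
    (ε : ℝ) (hε : 0 < ε) :
    ∫ t in Set.Icc (0:ℝ) 1, Set.indicator {t | |g t| ≤ ε} (fun t => |deriv g t|) t
      ≤ 6 * ε * N := by
  classical
  set c : ι → ℂ := fun j => 2 * π * Complex.I * (k j) with hc
  set S : ℝ → ℂ := fun t => ∑ j ∈ K, b j * Complex.exp (c j * t) with hSdef
  have hgS : ∀ t : ℝ, (g t : ℂ) = S t := by
    intro t
    rw [hg t]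
    refine Finset.sum_congr rfl fun j _ => ?_
    congr 1
    rw [hc]
    push_cast
    ring_nf
  set D : ℝ → ℂ := fun t => ∑ j ∈ K, (b j * c j) * Complex.exp (c j * t) with hDdef
  have hS : ∀ t : ℝ, HasDerivAt S (D t) t := by
    intro t
    apply HasDerivAt.fun_sum
    intro j _
    have h1 : HasDerivAt (fun t : ℝ => c j * (t : ℂ)) (c j) t := by
      simpa using (Complex.ofRealCLM.hasDerivAt (x := t)).const_mul (c j)
    have h3 := (h1.cexp).const_mul (b j)
    exact h3.congr_deriv (by ring)
  have hDcont : Continuous D := by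
    apply continuous_finset_sum
    intro j _
    exact continuous_const.mul ((continuous_const.mul Complex.continuous_ofReal).cexp)
  set gr' : ℝ → ℝ := fun t => (D t).re with hgr'
  have hfun : (fun t : ℝ => (S t).re) = g := by
    funext t
    rw [← hgS t]
    simp
  have hg' : ∀ t : ℝ, HasDerivAt g (gr' t) t := by
    intro t
    have h1 : HasDerivAt (fun t : ℝ => (S t).re) ((D t).re) t := by
      simpa [Function.comp_def] using (Complex.reCLM.hasFDerivAt (x := S t)).comp_hasDerivAt t (hS t)
    rwa [hfun] at h1
  have hDim : ∀ t : ℝ, (D t).im = 0 := by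
    intro t
    have h1 : HasDerivAt (fun t : ℝ => (S t).im) ((D t).im) t := by
      simpa [Function.comp_def] using (Complex.imCLM.hasFDerivAt (x := S t)).comp_hasDerivAt t (hS t)
    have hfun2 : (fun t : ℝ => (S t).im) = fun _ => (0:ℝ) := by
      funext s
      rw [← hgS s]
      simp
    rw [hfun2] at h1
    exact h1.unique (hasDerivAt_const t 0)
  have hD0 : ∀ t : ℝ, (gr' t = 0 ↔ D t = 0) := by
    intro t
    constructor
    · intro h
      exact Complex.ext (by simpa [hgr'] using h) (by simp [hDim t])
    · intro h
      simp [hgr', h]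
  have hderiv_eq : ∀ t : ℝ, deriv g t = gr' t := fun t => (hg' t).deriv
  -- polynomial
  set p : Polynomial ℂ := ∑ j ∈ K, Polynomial.C (b j * c j) * Polynomial.X ^ (k j + N).toNat
    with hp
  have hexp : ∀ j ∈ K, (((k j + N).toNat : ℂ)) = (k j : ℂ) + N := by
    intro j hj
    have h1 : 0 ≤ k j + N := by
      have := hk j hj
      omega
    rw [show ((k j + (N:ℤ)).toNat : ℂ) = (((k j + (N:ℤ)).toNat : ℤ) : ℂ) by push_cast; ring,
      Int.toNat_of_nonneg h1]
    push_cast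
    ring
  have hpev : ∀ t : ℝ, Polynomial.eval (Complex.exp (2 * π * Complex.I * t)) p
      = Complex.exp (2 * π * Complex.I * (N : ℂ) * t) * D t := by
    intro t
    rw [hp, Polynomial.eval_finset_sum, hDdef]
    rw [Finset.mul_sum]
    refine Finset.sum_congr rfl fun j hj => ?_
    simp only [Polynomial.eval_mul, Polynomial.eval_C, Polynomial.eval_pow, Polynomial.eval_X]
    rw [← Complex.exp_nat_mul, hexp j hj]
    rw [show Complex.exp (2 * π * Complex.I * (N:ℂ) * t) * (b j * c j * Complex.exp (c j * t))
      = b j * c j * (Complex.exp (2 * π * Complex.I * (N:ℂ) * t) * Complex.exp (c j * t)) by ring,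
      ← Complex.exp_add]
    congr 1
    rw [hc]
    push_cast
    ring
  by_cases hp0 : p = 0
  · have hDz : ∀ t : ℝ, D t = 0 := by
      intro t
      have := hpev t
      rw [hp0] at this
      simp only [Polynomial.eval_zero] at this
      rcases mul_eq_zero.1 this.symm with h | h
      · exact absurd h (Complex.exp_ne_zero _)
      · exact h
    have hzero : ∀ t : ℝ, Set.indicator {t : ℝ | |g t| ≤ ε} (fun t => |deriv g t|) t = 0 := by
      intro t
      have h0 : |deriv g t| = 0 := by
        rw [hderiv_eq t]
        simp [hgr', hDz t]
      by_cases h : t ∈ {t : ℝ | |g t| ≤ ε}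
      · rw [Set.indicator_of_mem h, h0]
      · rw [Set.indicator_of_notMem h]
    simp only [hzero, integral_zero]
    positivity
  · -- count zeros
    set Z : Set ℝ := {t | gr' t = 0} ∩ Set.Ioo 0 1 with hZ
    set φ : ℝ → ℂ := fun t => Complex.exp (2 * π * Complex.I * t) with hφ
    have hmap : ∀ t ∈ Z, φ t ∈ (p.roots.toFinset : Set ℂ) := by
      rintro t ⟨ht1, _⟩
      have hDt : D t = 0 := (hD0 t).1 ht1
      have : Polynomial.eval (φ t) p = 0 := by rw [hφ]; rw [hpev t, hDt, mul_zero]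
      simp only [Finset.coe_sort_coe, Multiset.mem_toFinset, Finset.mem_coe]
      rw [Polynomial.mem_roots hp0]
      exact this
    have hinj : Set.InjOn φ Z := by
      rintro s ⟨_, hs⟩ t ⟨_, ht⟩ hst
      rw [hφ] at hst
      simp only at hst
      rw [Complex.exp_eq_exp_iff_exists_int] at hst
      obtain ⟨n, hn⟩ := hst
      have h2 : (2 * (π:ℂ) * Complex.I) ≠ 0 := by
        simp [Real.pi_ne_zero, Complex.I_ne_zero, Complex.ofReal_ne_zero]
      have h3 : (s : ℂ) = (t : ℂ) + n := by
        apply mul_left_cancel₀ h2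
        rw [hn]
        ring
      have h4 : s = t + n := by exact_mod_cast h3
      have h5 : n = 0 := by
        have hb1 : (n : ℝ) = s - t := by rw [h4]; ring
        have : -1 < (n:ℝ) ∧ (n:ℝ) < 1 := by
          constructor <;> rw [hb1] <;> [nlinarith [hs.1, hs.2, ht.1, ht.2];
            nlinarith [hs.1, hs.2, ht.1, ht.2]]
        have h6 : -1 < n ∧ n < 1 := by exact_mod_cast this
        omega
      rw [h4, h5]
      simp
    have hfinR : (p.roots.toFinset : Set ℂ).Finite := (p.roots.toFinset).finite_toSet
    have hfinZ : Z.Finite := by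
      apply Set.Finite.of_finite_image _ hinj
      exact hfinR.subset (Set.image_subset_iff.2 hmap)
    have hdeg : p.natDegree ≤ 2 * N := by
      apply Polynomial.natDegree_sum_le_of_forall_le
      intro j hj
      refine le_trans (Polynomial.natDegree_C_mul_le _ _) ?_
      rw [Polynomial.natDegree_X_pow]
      have := hk j hj
      omega
    have hcardZ : Z.ncard ≤ 2 * N := by
      have h1 := Set.ncard_le_ncard_of_injOn φ hmap hinj hfinR
      have h2 : (p.roots.toFinset : Set ℂ).ncard = p.roots.toFinset.card :=
        Set.ncard_coe_finset _
      have h3 : p.roots.toFinset.card ≤ Multiset.card p.roots :=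
        Multiset.toFinset_card_le _
      have h4 : Multiset.card p.roots ≤ p.natDegree := Polynomial.card_roots' p
      omega
    have hgr'cont : Continuous gr' := Complex.continuous_re.comp hDcont
    have key := tv_pieces g gr' hg' hgr'cont ε hε (2*N) 0 1 (by norm_num)
      (by rwa [← hZ]) (by rwa [← hZ])
    calc ∫ t in Set.Icc (0:ℝ) 1, Set.indicator {t | |g t| ≤ ε} (fun t => |deriv g t|) t
        = ∫ t in Set.Icc (0:ℝ) 1, Set.indicator {t | |g t| ≤ ε} (fun t => |gr' t|) t := by
          simp only [hderiv_eq]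
      _ ≤ 2 * ε * ((2*N : ℕ) + 1) := key
      _ ≤ 6 * ε * N := by
          have hN' : (1:ℝ) ≤ N := by exact_mod_cast hN
          push_cast
          nlinarith [hε.le]

lemma key_slice {m : ℕ} (i : Fin (m+1)) (N : ℕ) (hN : 1 ≤ N)
    (Λ : Finset (Fin (m+1) → ℤ)) (hfreq : ∀ lam ∈ Λ, (lam i).natAbs ≤ N)
    (c : (Fin (m+1) → ℤ) → ℂ) (f : (Fin (m+1) → ℝ) → ℝ)
    (hf : ∀ x : Fin (m+1) → ℝ, (f x : ℂ) =
      ∑ lam ∈ Λ, c lam * Complex.exp (2 * π * Complex.I * ∑ j, (lam j : ℂ) * (x j : ℂ)))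
    (hDF : Differentiable ℝ f) (ε : ℝ) (hε : 0 < ε)
    (hIntg : IntegrableOn
      (Set.indicator {x : Fin (m+1) → ℝ | |f x| ≤ ε}
        (fun x => |fderiv ℝ f x (Pi.single i 1)|))
      (Set.univ.pi fun _ : Fin (m+1) => Set.Icc (0 : ℝ) 1)) :
    ∫ x in (Set.univ.pi fun _ : Fin (m+1) => Set.Icc (0 : ℝ) 1),
      Set.indicator {x : Fin (m+1) → ℝ | |f x| ≤ ε}
        (fun x => |fderiv ℝ f x (Pi.single i 1)|) x
      ≤ 6 * ε * N := by
  classical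
  set T : Set (Fin (m+1) → ℝ) := {x | |f x| ≤ ε} with hT
  set Di : (Fin (m+1) → ℝ) → ℝ := fun x => |fderiv ℝ f x (Pi.single i 1)| with hDi
  set cube : Set (Fin (m+1) → ℝ) := Set.univ.pi fun _ => Set.Icc (0:ℝ) 1 with hcube
  set cube' : Set (Fin m → ℝ) := Set.univ.pi fun _ => Set.Icc (0:ℝ) 1 with hcube'
  set s : Set (ℝ × (Fin m → ℝ)) := (Set.Icc (0:ℝ) 1) ×ˢ cube' with hs
  have hsmeas : MeasurableSet s :=
    measurableSet_Icc.prod (MeasurableSet.univ_pi fun _ => measurableSet_Icc)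
  set e := MeasurableEquiv.piFinSuccAbove (fun _ : Fin (m+1) => ℝ) i with he
  have hmp : MeasurePreserving e volume volume :=
    MeasureTheory.volume_preserving_piFinSuccAbove (fun _ : Fin (m+1) => ℝ) i
  have hex : ∀ x : Fin (m+1) → ℝ, e x = (x i, fun j => x (i.succAbove j)) := by
    intro x
    simp only [he, MeasurableEquiv.piFinSuccAbove_apply, Fin.insertNthEquiv]
    rfl
  have hesymm : ∀ p : ℝ × (Fin m → ℝ), e.symm p = i.insertNth p.1 p.2 := by
    intro p
    simp [he, MeasurableEquiv.piFinSuccAbove_symm_apply, Fin.insertNthEquiv]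
  have hpre : cube = e ⁻¹' s := by
    ext x
    simp only [hcube, Set.mem_preimage, hs, Set.mem_prod, Set.mem_univ_pi, hex x, hcube']
    constructor
    · intro h
      exact ⟨h i, fun j => h (i.succAbove j)⟩
    · rintro ⟨h1, h2⟩ j
      rcases eq_or_ne j i with rfl | hj
      · exact h1
      · obtain ⟨j', rfl⟩ := Fin.exists_succAbove_eq hj
        exact h2 j'
  set H : ℝ × (Fin m → ℝ) → ℝ := fun p => Set.indicator T Di (e.symm p) with hH
  have hHcomp : (fun x => H (e x)) = Set.indicator T Di := by
    funext x
    simp [hH]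
  have hstep1 : ∫ x in cube, Set.indicator T Di x = ∫ p in s, H p := by
    rw [hpre]
    calc ∫ x in e ⁻¹' s, Set.indicator T Di x
        = ∫ x in e ⁻¹' s, H (e x) := by
          apply setIntegral_congr_fun (e.measurableSet_preimage.2 hsmeas)
          intro x _
          rw [← hHcomp]
      _ = ∫ p in s, H p := hmp.setIntegral_preimage_emb e.measurableEmbedding H s
  have hHint : Integrable H ((volume.restrict (Set.Icc (0:ℝ) 1)).prod (volume.restrict cube')) := by
    rw [Measure.prod_restrict, ← Measure.volume_eq_prod]
    have h2 := (hmp.restrict_preimage hsmeas).integrable_comp_emb e.measurableEmbedding (g := H)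
    rw [← h2]
    show Integrable (H ∘ e) _
    rw [show H ∘ e = Set.indicator T Di from funext fun x => by simp [hH]]
    rw [← hpre]
    exact hIntg
  have hrs : ((volume.restrict (Set.Icc (0:ℝ) 1)).prod (volume.restrict cube'))
      = (volume : Measure (ℝ × (Fin m → ℝ))).restrict s := by
    rw [Measure.prod_restrict, ← Measure.volume_eq_prod]
  have hstep2 : ∫ p in s, H p
      = ∫ y, (∫ t, H (t, y) ∂(volume.restrict (Set.Icc (0:ℝ) 1))) ∂(volume.restrict cube') := by
    rw [← hrs]
    exact MeasureTheory.integral_prod_symm H hHint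
  -- slice bound
  have hslice : ∀ y : Fin m → ℝ,
      ∫ t, H (t, y) ∂(volume.restrict (Set.Icc (0:ℝ) 1)) ≤ 6 * ε * N := by
    intro y
    set gy : ℝ → ℝ := fun t => f (i.insertNth t y) with hgy
    have hfunc : (fun t : ℝ => (i.insertNth t y : Fin (m+1) → ℝ))
        = fun t : ℝ => ((i.insertNth (0:ℝ) y : Fin (m+1) → ℝ)
            + t • (Pi.single i (1:ℝ) : Fin (m+1) → ℝ)) := by
      funext t
      funext j
      rcases eq_or_ne j i with rfl | hj
      · simp
      · obtain ⟨j', rfl⟩ := Fin.exists_succAbove_eq hj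
        have hne : i.succAbove j' ≠ i := Fin.succAbove_ne i j'
        simp [Fin.insertNth_apply_succAbove, Pi.single_eq_of_ne hne]
    have haff : ∀ t : ℝ, HasDerivAt (fun t : ℝ => (i.insertNth t y : Fin (m+1) → ℝ))
        ((Pi.single i (1:ℝ) : Fin (m+1) → ℝ)) t := by
      intro t
      rw [hfunc]
      have h1 : HasDerivAt (fun t : ℝ => t • (Pi.single i (1:ℝ) : Fin (m+1) → ℝ))
          ((1:ℝ) • (Pi.single i (1:ℝ) : Fin (m+1) → ℝ)) t :=
        (hasDerivAt_id t).smul_const _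
      have h2 := h1.const_add ((i.insertNth (0:ℝ) y : Fin (m+1) → ℝ))
      simpa using h2
    have hgyd : ∀ t : ℝ,
        HasDerivAt gy (fderiv ℝ f (i.insertNth t y) (Pi.single i 1)) t := by
      intro t
      exact ((hDF _).hasFDerivAt.comp_hasDerivAt t (haff t))
    have hderiveq : ∀ t, deriv gy t = fderiv ℝ f (i.insertNth t y) (Pi.single i 1) :=
      fun t => (hgyd t).deriv
    have hHeq : ∀ t : ℝ, H (t, y)
        = Set.indicator {t : ℝ | |gy t| ≤ ε} (fun t => |deriv gy t|) t := by
      intro t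
      have hx : e.symm (t, y) = i.insertNth t y := hesymm (t, y)
      simp only [hH, hx]
      by_cases hmem : i.insertNth t y ∈ T
      · rw [Set.indicator_of_mem hmem, Set.indicator_of_mem (show t ∈ {t : ℝ | |gy t| ≤ ε} from hmem)]
        simp only [hDi, hderiveq t, abs_abs]
      · rw [Set.indicator_of_notMem hmem,
          Set.indicator_of_notMem (show t ∉ {t : ℝ | |gy t| ≤ ε} from hmem)]
    have htrig : ∀ t : ℝ, ((gy t : ℝ) : ℂ) = ∑ lam ∈ Λ,
        (c lam * Complex.exp (2 * π * Complex.I *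
          ∑ j : Fin m, (lam (i.succAbove j) : ℂ) * (y j : ℂ)))
        * Complex.exp (2 * π * Complex.I * ((lam i : ℂ) * (t : ℂ))) := by
      intro t
      rw [hgy]
      set x : Fin (m+1) → ℝ := (i.insertNth t y : Fin (m+1) → ℝ) with hxdef
      rw [hf x]
      refine Finset.sum_congr rfl fun lam _ => ?_
      rw [Fin.sum_univ_succAbove (fun j => ((lam j : ℂ)) * ((x j : ℝ) : ℂ)) i]
      rw [hxdef]
      simp only [Fin.insertNth_apply_same, Fin.insertNth_apply_succAbove]
      rw [mul_add, Complex.exp_add]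
      ring
    simp only [hHeq]
    exact oneD Λ (fun lam => lam i) N hN hfreq _ gy htrig ε hε
  -- outer integral
  haveI hfin : IsFiniteMeasure (volume.restrict cube') := by
    constructor
    rw [Measure.restrict_apply_univ, hcube', MeasureTheory.volume_pi_pi]
    simp [Real.volume_Icc]
  have hinner_int : Integrable
      (fun y => ∫ t, H (t, y) ∂(volume.restrict (Set.Icc (0:ℝ) 1)))
      (volume.restrict cube') := hHint.integral_prod_right
  have houter : ∫ y, (∫ t, H (t, y) ∂(volume.restrict (Set.Icc (0:ℝ) 1)))
      ∂(volume.restrict cube') ≤ 6 * ε * N := by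
    calc ∫ y, (∫ t, H (t, y) ∂(volume.restrict (Set.Icc (0:ℝ) 1))) ∂(volume.restrict cube')
        ≤ ∫ _, (6 * ε * (N:ℝ)) ∂(volume.restrict cube') :=
          integral_mono hinner_int (integrable_const _) hslice
      _ = ((volume.restrict cube') Set.univ).toReal • (6 * ε * (N:ℝ)) := integral_const _
      _ = 6 * ε * N := by
          rw [Measure.restrict_apply_univ, hcube', MeasureTheory.volume_pi_pi]
          simp [Real.volume_Icc]
  calc ∫ x in cube, Set.indicator T Di x = ∫ p in s, H p := hstep1
    _ = _ := hstep2
    _ ≤ 6 * ε * N := houter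

/-- For a real-valued eigenfunction `f(x) = Σ_{λ∈Λ} c_λ e^{2πi⟨λ,x⟩}` on the torus,
with frequencies of squared norm `E`, and any `ε > 0`,
`(1/(2ε)) ∫_{𝕋^d} 1_{|f|≤ε} |∇f| dx ≤ 6 d √E`. -/
theorem stmt6 (d E : ℕ) (hd : 1 ≤ d) (hE : 1 ≤ E)
    (Λ : Finset (Fin d → ℤ))
    (hΛ : ∀ lam ∈ Λ, ∑ i, (lam i)^2 = (E : ℤ))
    (c : (Fin d → ℤ) → ℂ) (f : (Fin d → ℝ) → ℝ)
    (hf : ∀ x : Fin d → ℝ, (f x : ℂ) =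
      ∑ lam ∈ Λ, c lam * Complex.exp (2 * π * Complex.I * ∑ i, (lam i : ℂ) * (x i : ℂ)))
    (ε : ℝ) (hε : 0 < ε) :
    (1 / (2 * ε)) *
      ∫ x in (Set.univ.pi fun _ : Fin d => Set.Icc (0 : ℝ) 1),
        Set.indicator {x : Fin d → ℝ | |f x| ≤ ε} (fun x => ‖fderiv ℝ f x‖) x
      ≤ 6 * d * Real.sqrt E := by
  classical
  obtain ⟨m, rfl⟩ := Nat.exists_eq_succ_of_ne_zero (show d ≠ 0 by omega)
  set N := Nat.sqrt E with hNdef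
  have hN : 1 ≤ N := by
    have := Nat.sqrt_pos.2 (show 0 < E by omega)
    omega
  have hN2 : ((N:ℝ))^2 ≤ (E:ℝ) := by exact_mod_cast Nat.sqrt_le' E
  have hNE : (N : ℝ) ≤ Real.sqrt E := (Real.le_sqrt (by positivity) (by positivity)).2 hN2
  have hfreq : ∀ lam ∈ Λ, ∀ i, (lam i).natAbs ≤ N := by
    intro lam hlam i
    have h1 : (lam i)^2 ≤ (E:ℤ) := by
      rw [← hΛ lam hlam]
      exact Finset.single_le_sum (f := fun j => (lam j)^2) (fun j _ => sq_nonneg _)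
        (Finset.mem_univ i)
    have h2 : ((lam i).natAbs) * ((lam i).natAbs) ≤ E := by
      zify
      nlinarith [h1, sq_abs (lam i)]
    rw [hNdef, Nat.le_sqrt]
    exact h2
  -- smoothness of f
  set F : (Fin (m+1) → ℝ) → ℂ := fun x =>
    ∑ lam ∈ Λ, c lam * Complex.exp (2 * π * Complex.I * ∑ i, (lam i : ℂ) * (x i : ℂ)) with hF
  have hFsmooth : ContDiff ℝ ⊤ F := by
    apply ContDiff.sum
    intro lam _
    apply ContDiff.mul contDiff_const
    apply Complex.contDiff_exp.comp
    apply ContDiff.mul contDiff_const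
    apply ContDiff.sum
    intro j _
    apply ContDiff.mul contDiff_const
    exact Complex.ofRealCLM.contDiff.comp (ContinuousLinearMap.proj (R := ℝ) (φ := fun _ : Fin (m+1) => ℝ) j).contDiff
  have hfeq : f = fun x => (F x).re := by
    funext x
    rw [show (F x) = ((f x : ℝ) : ℂ) from (hf x).symm]
    simp
  have hCD : ContDiff ℝ ⊤ f := by
    rw [hfeq]
    exact Complex.reCLM.contDiff.comp hFsmooth
  have hDF : Differentiable ℝ f := hCD.differentiable (by simp)
  have hfdcont : Continuous (fderiv ℝ f) := hCD.continuous_fderiv (by simp)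
  set T : Set (Fin (m+1) → ℝ) := {x | |f x| ≤ ε} with hT
  have hTc : IsClosed T := isClosed_le (hDF.continuous.abs) continuous_const
  set cube : Set (Fin (m+1) → ℝ) := Set.univ.pi fun _ => Set.Icc (0:ℝ) 1 with hcube
  have hcubecomp : IsCompact cube := isCompact_univ_pi fun _ => isCompact_Icc
  -- operator norm bound
  have hop : ∀ x : Fin (m+1) → ℝ,
      ‖fderiv ℝ f x‖ ≤ ∑ i, |fderiv ℝ f x (Pi.single i 1)| := by
    intro x
    apply ContinuousLinearMap.opNorm_le_bound _ (by positivity)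
    intro v
    have hv : (∑ i, Pi.single i (v i)) = v := Finset.univ_sum_single v
    calc ‖fderiv ℝ f x v‖ = ‖fderiv ℝ f x (∑ i, Pi.single i (v i))‖ := by rw [hv]
      _ = ‖∑ i, fderiv ℝ f x (Pi.single i (v i))‖ := by rw [map_sum]
      _ ≤ ∑ i, ‖fderiv ℝ f x (Pi.single i (v i))‖ := norm_sum_le _ _
      _ ≤ ∑ i, |fderiv ℝ f x (Pi.single i 1)| * ‖v‖ := by
          apply Finset.sum_le_sum
          intro i _
          have hsingle : (Pi.single i (v i) : Fin (m+1) → ℝ)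
              = (v i) • (Pi.single i (1:ℝ) : Fin (m+1) → ℝ) := by
            rw [← Pi.single_smul, smul_eq_mul, mul_one]
          rw [hsingle, (fderiv ℝ f x).map_smul]
          rw [smul_eq_mul, Real.norm_eq_abs, abs_mul]
          rw [mul_comm]
          apply mul_le_mul_of_nonneg_left _ (abs_nonneg _)
          exact (Real.norm_eq_abs (v i)) ▸ norm_le_pi_norm v i
      _ = (∑ i, |fderiv ℝ f x (Pi.single i 1)|) * ‖v‖ := (Finset.sum_mul _ _ _).symm
  -- integrability of each piece
  have hIntg : ∀ i : Fin (m+1), IntegrableOn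
      (Set.indicator T (fun x => |fderiv ℝ f x (Pi.single i 1)|)) cube := by
    intro i
    apply Integrable.indicator _ hTc.measurableSet
    apply ContinuousOn.integrableOn_compact hcubecomp
    apply Continuous.continuousOn
    exact (hfdcont.clm_apply continuous_const).abs
  set G : (Fin (m+1) → ℝ) → ℝ :=
    fun x => ∑ i, Set.indicator T (fun x => |fderiv ℝ f x (Pi.single i 1)|) x with hG
  have hGint : IntegrableOn G cube := integrable_finset_sum _ fun i _ => hIntg i
  have hpoint : ∀ x, Set.indicator T (fun x => ‖fderiv ℝ f x‖) x ≤ G x := by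
    intro x
    by_cases hx : x ∈ T
    · rw [Set.indicator_of_mem hx]
      calc ‖fderiv ℝ f x‖ ≤ ∑ i, |fderiv ℝ f x (Pi.single i 1)| := hop x
        _ = G x := by
            rw [hG]
            exact Finset.sum_congr rfl fun i _ => (Set.indicator_of_mem hx (fun x => |fderiv ℝ f x (Pi.single i 1)|)).symm
    · rw [Set.indicator_of_notMem hx]
      rw [hG]
      apply Finset.sum_nonneg
      intro i _
      exact Set.indicator_nonneg (fun y _ => abs_nonneg _) x
  have hstep1 : ∫ x in cube, Set.indicator T (fun x => ‖fderiv ℝ f x‖) x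
      ≤ ∫ x in cube, G x :=
    integral_mono_of_nonneg
      (Filter.Eventually.of_forall fun x => Set.indicator_nonneg (fun y _ => norm_nonneg _) x)
      hGint (Filter.Eventually.of_forall hpoint)
  have hstep2 : ∫ x in cube, G x
      = ∑ i, ∫ x in cube, Set.indicator T (fun x => |fderiv ℝ f x (Pi.single i 1)|) x :=
    integral_finset_sum _ fun i _ => hIntg i
  have hkey : ∀ i : Fin (m+1),
      ∫ x in cube, Set.indicator T (fun x => |fderiv ℝ f x (Pi.single i 1)|) x
        ≤ 6 * ε * N := by
    intro i
    exact key_slice i N hN Λ (fun lam hlam => hfreq lam hlam i) c f hf hDF ε hε (hIntg i)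
  have htot : ∫ x in cube, Set.indicator T (fun x => ‖fderiv ℝ f x‖) x
      ≤ (m+1) * (6 * ε * N) := by
    calc ∫ x in cube, Set.indicator T (fun x => ‖fderiv ℝ f x‖) x
        ≤ ∫ x in cube, G x := hstep1
      _ = ∑ i, ∫ x in cube, Set.indicator T (fun x => |fderiv ℝ f x (Pi.single i 1)|) x := hstep2
      _ ≤ ∑ _i : Fin (m+1), (6 * ε * (N:ℝ)) := Finset.sum_le_sum fun i _ => hkey i
      _ = (m+1) * (6 * ε * N) := by
          rw [Finset.sum_const, Finset.card_univ, Fintype.card_fin]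
          push_cast
          ring
  calc (1 / (2 * ε)) *
      ∫ x in cube, Set.indicator T (fun x => ‖fderiv ℝ f x‖) x
      ≤ (1 / (2 * ε)) * ((m+1) * (6 * ε * N)) := by
        apply mul_le_mul_of_nonneg_left htot (by positivity)
    _ = 3 * (m+1) * N := by field_simp; ring
    _ ≤ 6 * (m+1 : ℕ) * Real.sqrt E := by
        have h1 : (0:ℝ) ≤ (m+1 : ℕ) := by positivity
        have h2 : (0:ℝ) ≤ (N:ℝ) := by positivity
        push_cast
        nlinarith [hNE, Real.sqrt_nonneg (E:ℝ)]
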